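/- Let f ∈ ℂ[x,y] with n = deg_y f ≥ 1. Then ℂ(x,y) is a finite algebraic extension of its subfield ℂ(x,f) generated by x and f, and the degree of this extension equals n: [ℂ(x,y) : ℂ(x,f)] = deg_y f. -/

import Mathlib

set_option maxHeartbeats 1000000
set_option synthInstance.maxHeartbeats 400000

open MvPolynomial

section AuxA

open Polynomial IntermediateField

variable {F L : Type*} [Field F] [Field L] [Algebra F L]


variable {F L : Type*} [Field F] [Field L] [Algebra F L]

theorem coe_aeval_gen (t : L) (q : F[X]) :
    (algebraMap (↥F⟮t⟯) L) (Polynomial.aeval (AdjoinSimple.gen F t) q) = Polynomial.aeval t q := by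
  rw [← Polynomial.aeval_algebraMap_apply, AdjoinSimple.algebraMap_gen]

theorem transcendental_gen {t : L} (ht : Transcendental F t) :
    Transcendental F (AdjoinSimple.gen F t) := by
  rw [transcendental_iff_injective, injective_iff_map_eq_zero] at ht ⊢
  intro q hq
  apply ht
  have h2 := congrArg (algebraMap (↥F⟮t⟯) L) hq
  rwa [map_zero, coe_aeval_gen] at h2

noncomputable def adjoinAlg (F : Type*) {L : Type*} [Field F] [Field L] [Algebra F L] (t : L) :
    Algebra F[X] ↥F⟮t⟯ :=
  ((Polynomial.aeval (AdjoinSimple.gen F t)).toRingHom).toAlgebra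

theorem isFractionRing_adjoin {t : L} (ht : Transcendental F t) :
    letI := adjoinAlg F t
    IsFractionRing F[X] ↥F⟮t⟯ := by
  letI := adjoinAlg F t
  have halg : ∀ q : F[X], algebraMap F[X] ↥F⟮t⟯ q = Polynomial.aeval (AdjoinSimple.gen F t) q :=
    fun _ => rfl
  have hinj : Function.Injective (algebraMap F[X] ↥F⟮t⟯) :=
    transcendental_iff_injective.1 (transcendental_gen ht)
  refine (isLocalization_iff _ _).2 ⟨?_, ?_, ?_⟩
  · rintro ⟨s, hs⟩
    rw [mem_nonZeroDivisors_iff_ne_zero] at hs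
    rw [isUnit_iff_ne_zero, halg]
    intro h0
    exact hs (hinj (by rw [halg, h0, map_zero]))
  · intro z
    obtain ⟨r, s, hz⟩ := (IntermediateField.mem_adjoin_simple_iff F (z : L)).1 z.2
    by_cases hs : Polynomial.aeval t s = 0
    · refine ⟨(0, 1), ?_⟩
      have hz0 : z = 0 := by
        apply Subtype.ext
        rw [hz, hs, div_zero]; rfl
      simp [hz0]
    · have hs0 : s ≠ 0 := by rintro rfl; simp at hs
      refine ⟨(r, ⟨s, mem_nonZeroDivisors_of_ne_zero hs0⟩), ?_⟩
      apply Subtype.ext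
      push_cast
      rw [halg, halg]
      calc (z : L) * (algebraMap (↥F⟮t⟯) L) (Polynomial.aeval (AdjoinSimple.gen F t) s)
          = (z : L) * Polynomial.aeval t s := by rw [coe_aeval_gen]
        _ = Polynomial.aeval t r := by rw [hz, div_mul_cancel₀ _ hs]
        _ = _ := (coe_aeval_gen t r).symm
  · intro a b hab
    exact ⟨1, by rw [hinj hab]⟩


theorem transcendental_adjoin_simple {a b : L} (ha : Transcendental F a)
    (hab : Transcendental (↥(Algebra.adjoin F ({a} : Set L))) b) :
    Transcendental (↥F⟮a⟯) b := by
  letI alg1 : Algebra F[X] ↥F⟮a⟯ := adjoinAlg F a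
  haveI : IsFractionRing F[X] ↥F⟮a⟯ := isFractionRing_adjoin ha
  letI alg2 : Algebra F[X] L := ((Polynomial.aeval a).toRingHom).toAlgebra
  haveI : IsScalarTower F[X] ↥F⟮a⟯ L :=
    IsScalarTower.of_algebraMap_eq fun q => (coe_aeval_gen a q).symm
  intro halg
  have h2 : IsAlgebraic F[X] b := (IsFractionRing.isAlgebraic_iff F[X] ↥F⟮a⟯ L).2 halg
  apply hab
  obtain ⟨q, hq0, hqz⟩ := h2
  have hmem : ∀ r : F[X], Polynomial.aeval a r ∈ Algebra.adjoin F ({a} : Set L) := by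
    intro r
    rw [Algebra.adjoin_singleton_eq_range_aeval]
    exact ⟨r, rfl⟩
  let ρ : F[X] →ₐ[F] ↥(Algebra.adjoin F ({a} : Set L)) :=
    (Polynomial.aeval a).codRestrict _ hmem
  have hρinj : Function.Injective ρ := fun u v huv =>
    transcendental_iff_injective.1 ha (congrArg Subtype.val huv)
  refine ⟨q.map ρ.toRingHom, ?_, ?_⟩
  · intro h
    exact hq0 (Polynomial.map_injective _ hρinj (by rw [h, Polynomial.map_zero]))
  · rw [Polynomial.aeval_def, Polynomial.eval₂_map]
    have : (algebraMap (↥(Algebra.adjoin F ({a} : Set L))) L).comp ρ.toRingHom =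
        (Polynomial.aeval a).toRingHom := by
      exact RingHom.ext fun r => rfl
    rw [this]
    exact hqz

/-- The swap of the two variables in `F[X][Y]`. -/
noncomputable def swapHom (F : Type*) [CommRing F] : (Polynomial F)[X] →+* (Polynomial F)[X] :=
  Polynomial.eval₂RingHom
    (Polynomial.eval₂RingHom (Polynomial.C.comp Polynomial.C) Polynomial.X)
    (Polynomial.C Polynomial.X)

theorem swapHom_swapHom (F : Type*) [CommRing F] :
    (swapHom F).comp (swapHom F) = RingHom.id _ := by
  apply Polynomial.ringHom_ext'
  · apply Polynomial.ringHom_ext'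
    · ext a
      simp [swapHom]
    · simp [swapHom]
  · simp [swapHom]

noncomputable def swapEquiv (F : Type*) [CommRing F] : (Polynomial F)[X] ≃+* (Polynomial F)[X] :=
  RingEquiv.ofRingHom (swapHom F) (swapHom F) (swapHom_swapHom F) (swapHom_swapHom F)

theorem swap_Q (F : Type*) [CommRing F] (p : F[X]) :
    swapEquiv F (p.map (Polynomial.C : F →+* F[X]) - Polynomial.C Polynomial.X) =
      Polynomial.C p - Polynomial.X := by
  have h1 : swapHom F (Polynomial.C Polynomial.X) = Polynomial.X := by simp [swapHom]
  have h2 : swapHom F (p.map (Polynomial.C : F →+* F[X])) = Polynomial.C p := by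
    show Polynomial.eval₂ _ _ (p.map (Polynomial.C : F →+* F[X])) = _
    rw [Polynomial.eval₂_map]
    have h3 : ((Polynomial.eval₂RingHom
          ((Polynomial.C : F[X] →+* (Polynomial F)[X]).comp (Polynomial.C : F →+* F[X]))
          (Polynomial.X : (Polynomial F)[X])).comp (Polynomial.C : F →+* F[X]))
        = (Polynomial.C : F[X] →+* (Polynomial F)[X]).comp (Polynomial.C : F →+* F[X]) := by
      refine RingHom.ext fun a => ?_
      simp
    rw [h3, ← Polynomial.eval₂_C_X (p := p) (R := F),
      Polynomial.hom_eval₂ _ _ (Polynomial.C : F[X] →+* (Polynomial F)[X]) _]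
    simp [Polynomial.eval₂_C_X]
  show swapHom F _ = _
  rw [map_sub, h1, h2]

theorem irreducible_Q {F : Type*} [Field F] (p : F[X]) (hp : 1 ≤ p.natDegree) :
    Irreducible (p.map (Polynomial.C : F →+* F[X]) - Polynomial.C Polynomial.X) := by
  have h1 : Irreducible (Polynomial.C p - Polynomial.X : (Polynomial F)[X]) := by
    have h2 : (Polynomial.C p - Polynomial.X : (Polynomial F)[X]) =
        (Polynomial.X - Polynomial.C p) * (-1) := by ring
    rw [h2]
    exact (irreducible_mul_isUnit (isUnit_one (M := (Polynomial F)[X])).neg).2 (Polynomial.irreducible_X_sub_C p)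
  rw [← MulEquiv.irreducible_iff (swapEquiv F)]
  rw [swap_Q F p]
  exact h1

theorem primitive_Q {F : Type*} [Field F] (p : F[X]) (hp : 1 ≤ p.natDegree) :
    (p.map (Polynomial.C : F →+* F[X]) - Polynomial.C Polynomial.X).IsPrimitive := by
  intro r hr
  have hdvd : r ∣ (p.map (Polynomial.C : F →+* F[X]) - Polynomial.C Polynomial.X).coeff
      p.natDegree := (Polynomial.C_dvd_iff_dvd_coeff _ _).1 hr _
  have hco : (p.map (Polynomial.C : F →+* F[X]) - Polynomial.C Polynomial.X).coeff p.natDegree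
      = Polynomial.C (p.coeff p.natDegree) := by
    rw [Polynomial.coeff_sub, Polynomial.coeff_map, Polynomial.coeff_C,
      if_neg (by omega), sub_zero]
  rw [hco] at hdvd
  have hunit : IsUnit (Polynomial.C (p.coeff p.natDegree) : F[X]) := by
    rw [Polynomial.isUnit_C, isUnit_iff_ne_zero, ← Polynomial.leadingCoeff,
      Polynomial.leadingCoeff_ne_zero]
    intro h0
    rw [h0] at hp; simp at hp
  exact isUnit_of_dvd_unit hdvd hunit

theorem irreducible_aux {t : L} (ht : Transcendental F t) (p : F[X]) (hp : 1 ≤ p.natDegree) :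
    Irreducible (p.map (algebraMap F ↥F⟮t⟯) - Polynomial.C (AdjoinSimple.gen F t)) := by
  letI := adjoinAlg F t
  haveI := isFractionRing_adjoin ht
  letI := Classical.decEq F
  have key := (primitive_Q p hp).irreducible_iff_irreducible_map_fraction_map
    (K := ↥F⟮t⟯) |>.1 (irreducible_Q p hp)
  have heq : (p.map (Polynomial.C : F →+* F[X]) - Polynomial.C Polynomial.X).map
      (algebraMap F[X] ↥F⟮t⟯) = p.map (algebraMap F ↥F⟮t⟯) - Polynomial.C (AdjoinSimple.gen F t) := by
    rw [Polynomial.map_sub, Polynomial.map_map, Polynomial.map_C]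
    congr 1
    · congr 1
      refine RingHom.ext fun a => ?_
      show Polynomial.aeval (AdjoinSimple.gen F t) (Polynomial.C a) = algebraMap F ↥F⟮t⟯ a
      rw [Polynomial.aeval_C]
    · show Polynomial.C (Polynomial.aeval (AdjoinSimple.gen F t) Polynomial.X) = _
      rw [Polynomial.aeval_X]
  rwa [heq] at key

theorem main_aux {y : L} (hy : Transcendental F y)
    (hgen : IntermediateField.adjoin F {y} = ⊤)
    (p : F[X]) (hp : 1 ≤ p.natDegree) :
    FiniteDimensional (↥F⟮Polynomial.aeval y p⟯) L ∧
      Module.finrank (↥F⟮Polynomial.aeval y p⟯) L = p.natDegree := by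
  set t := Polynomial.aeval y p with hT
  have hp0 : p ≠ 0 := fun h => by rw [h] at hp; simp at hp
  have ht : Transcendental F t := by
    rintro ⟨q, hq0, hqz⟩
    apply hy
    refine ⟨q.comp p, ?_, ?_⟩
    · intro h
      have h1 : (q.comp p).leadingCoeff ≠ 0 := by
        rw [Polynomial.leadingCoeff_comp (by omega)]
        exact mul_ne_zero (Polynomial.leadingCoeff_ne_zero.2 hq0)
          (pow_ne_zero _ (Polynomial.leadingCoeff_ne_zero.2 hp0))
      exact h1 (by rw [h, Polynomial.leadingCoeff_zero])
    · rw [Polynomial.aeval_comp]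
      exact hqz
  set P : Polynomial (↥F⟮t⟯) :=
    p.map (algebraMap F ↥F⟮t⟯) - Polynomial.C (AdjoinSimple.gen F t) with hP
  have hPirr : Irreducible P := irreducible_aux ht p hp
  have hPdeg : P.natDegree = p.natDegree := by
    rw [hP, Polynomial.natDegree_sub_C,
      Polynomial.natDegree_map_eq_of_injective (algebraMap F ↥F⟮t⟯).injective]
  have hProot : Polynomial.aeval y P = 0 := by
    rw [hP, map_sub, Polynomial.aeval_map_algebraMap, Polynomial.aeval_C,
      AdjoinSimple.algebraMap_gen]
    rw [← hT, sub_self]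
  have hP0 : P ≠ 0 := fun h => by rw [h] at hPdeg; simp at hPdeg; omega
  have hyint : IsIntegral (↥F⟮t⟯) y := (IsAlgebraic.isIntegral ⟨P, hP0, hProot⟩)
  have hmindeg : (minpoly (↥F⟮t⟯) y).natDegree = p.natDegree := by
    rw [← minpoly.eq_of_irreducible hPirr hProot,
      Polynomial.natDegree_mul_C
        (inv_ne_zero (Polynomial.leadingCoeff_ne_zero.2 hP0)), hPdeg]
  have htop : IntermediateField.adjoin (↥F⟮t⟯) {y} = ⊤ := by
    rw [eq_top_iff]
    intro z _
    have hz : z ∈ IntermediateField.adjoin F {y} := by rw [hgen]; trivial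
    have hle : IntermediateField.adjoin F {y} ≤
        (IntermediateField.adjoin (↥F⟮t⟯) {y}).restrictScalars F := by
      rw [IntermediateField.adjoin_le_iff]
      rintro w rfl
      rw [SetLike.mem_coe, IntermediateField.mem_restrictScalars]
      exact IntermediateField.subset_adjoin _ _ rfl
    rw [← IntermediateField.mem_restrictScalars F]
    exact hle hz
  have h1 := IntermediateField.adjoin.finrank hyint
  rw [hmindeg] at h1
  have h2 := IntermediateField.adjoin.finiteDimensional hyint
  rw [htop] at h1 h2
  have e := (IntermediateField.topEquiv (F := ↥F⟮t⟯) (E := L)).toLinearEquiv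
  constructor
  · exact Module.Finite.equiv e
  · rw [← h1]
    exact (e.finrank_eq).symm

end AuxA

section AuxB

open IntermediateField
theorem bridge {L : Type*} [Field L] [Algebra (MvPolynomial (Fin 2) ℂ) L]
    [Algebra ℂ L] [IsScalarTower ℂ (MvPolynomial (Fin 2) ℂ) L]
    [IsFractionRing (MvPolynomial (Fin 2) ℂ) L]
    (f : MvPolynomial (Fin 2) ℂ) (hf : 1 ≤ f.degreeOf 1)
    {x y : L} (hx : algebraMap (MvPolynomial (Fin 2) ℂ) L (X 0) = x)
    (hy : algebraMap (MvPolynomial (Fin 2) ℂ) L (X 1) = y) :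
    FiniteDimensional (↥(IntermediateField.adjoin ℂ
        ({x, algebraMap (MvPolynomial (Fin 2) ℂ) L f} : Set L))) L ∧
    Module.finrank (↥(IntermediateField.adjoin ℂ
        ({x, algebraMap (MvPolynomial (Fin 2) ℂ) L f} : Set L))) L = f.degreeOf 1 := by
  classical
  let φ : MvPolynomial (Fin 2) ℂ →ₐ[ℂ] L := IsScalarTower.toAlgHom ℂ _ L
  have hφ : ∀ r, φ r = algebraMap (MvPolynomial (Fin 2) ℂ) L r := fun _ => rfl
  have hφinj : Function.Injective φ := IsFractionRing.injective (MvPolynomial (Fin 2) ℂ) L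
  have hgX : ⇑φ ∘ X = ![x, y] := by
    funext i
    fin_cases i
    · exact hx
    · exact hy
  have haix : AlgebraicIndependent ℂ ![x, y] := by
    have h := (MvPolynomial.algebraicIndependent_X (Fin 2) ℂ).map (f := φ) hφinj.injOn
    rwa [hgX] at h
  have hxT : Transcendental ℂ x := haix.transcendental 0
  have h1 : AlgebraicIndependent ℂ (fun _ : Fin 1 => x) :=
    haix.comp (fun _ => 0) (fun a b _ => Subsingleton.elim a b)
  let e : Option (Fin 1) ≃ Fin 2 :=
    { toFun := fun o => o.elim 1 fun _ => 0
      invFun := fun i => if i = 0 then some 0 else none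
      left_inv := by
        rintro (_ | i)
        · rfl
        · simp [Subsingleton.elim (0 : Fin 1) i]
      right_inv := by intro i; fin_cases i <;> simp }
  have hopt : AlgebraicIndependent ℂ (fun o : Option (Fin 1) => o.elim y fun _ => x) := by
    have h := (algebraicIndependent_equiv e).2 haix
    have hfun : (![x, y] ∘ ⇑e) = fun o : Option (Fin 1) => o.elim y fun _ => x := by
      funext o; cases o <;> rfl
    rwa [hfun] at h
  have hxy : Transcendental (↥(Algebra.adjoin ℂ (Set.range fun _ : Fin 1 => x))) y :=
    (h1.option_iff_transcendental y).1 hopt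
  rw [Set.range_const] at hxy
  have hyE : Transcendental (↥ℂ⟮x⟯) y := transcendental_adjoin_simple hxT hxy
  have hxET : Transcendental ℂ (IntermediateField.AdjoinSimple.gen ℂ x) :=
    transcendental_gen hxT
  -- the polynomial p over ℂ⟮x⟯
  set g' : Fin 2 → Polynomial ↥ℂ⟮x⟯ :=
    ![Polynomial.C (IntermediateField.AdjoinSimple.gen ℂ x), Polynomial.X] with hg'
  set p : Polynomial ↥ℂ⟮x⟯ := MvPolynomial.aeval g' f with hp
  -- (A) p(y) = f in L
  have hcomp : ((Polynomial.aeval y : Polynomial ↥ℂ⟮x⟯ →ₐ[↥ℂ⟮x⟯] L).restrictScalars ℂ).comp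
      (MvPolynomial.aeval g') = φ := by
    apply MvPolynomial.algHom_ext
    rw [Fin.forall_fin_two]
    constructor
    · rw [AlgHom.comp_apply, AlgHom.restrictScalars_apply, MvPolynomial.aeval_X, hφ, hx]
      show Polynomial.aeval y (Polynomial.C (IntermediateField.AdjoinSimple.gen ℂ x)) = x
      rw [Polynomial.aeval_C, IntermediateField.AdjoinSimple.algebraMap_gen]
    · rw [AlgHom.comp_apply, AlgHom.restrictScalars_apply, MvPolynomial.aeval_X, hφ, hy]
      show Polynomial.aeval y (Polynomial.X : Polynomial ↥ℂ⟮x⟯) = y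
      rw [Polynomial.aeval_X]
  have haA : Polynomial.aeval y p = algebraMap (MvPolynomial (Fin 2) ℂ) L f :=
    DFunLike.congr_fun hcomp f
  -- (B) natDegree p = degreeOf 1 f
  have hone : AlgebraicIndependent ℂ ![IntermediateField.AdjoinSimple.gen ℂ x] :=
    algebraicIndependent_iff_transcendental.2 hxET
  set γ : MvPolynomial (Fin 1) ℂ →ₐ[ℂ] ↥ℂ⟮x⟯ :=
    MvPolynomial.aeval ![IntermediateField.AdjoinSimple.gen ℂ x] with hγ
  have hγinj : Function.Injective ⇑γ.toRingHom := algebraicIndependent_iff_injective_aeval.1 hone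
  have hpq : p = Polynomial.map γ.toRingHom
      ((MvPolynomial.finSuccEquiv ℂ 1) (MvPolynomial.rename (Equiv.swap (0 : Fin 2) 1) f)) := by
    have hcomp2 : ((Polynomial.mapAlgHom γ).comp
        ((MvPolynomial.finSuccEquiv ℂ 1).toAlgHom.comp
          (MvPolynomial.rename (Equiv.swap (0 : Fin 2) 1)))) = MvPolynomial.aeval g' := by
      apply MvPolynomial.algHom_ext
      rw [Fin.forall_fin_two]
      constructor
      · have h0 : Equiv.swap (0 : Fin 2) 1 0 = 1 := Equiv.swap_apply_left 0 1
        have h1' : (1 : Fin 2) = Fin.succ 0 := rfl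
        rw [AlgHom.comp_apply, AlgHom.comp_apply, MvPolynomial.aeval_X]
        rw [MvPolynomial.rename_X, h0, h1', AlgEquiv.coe_algHom, MvPolynomial.finSuccEquiv_X_succ]
        show Polynomial.map γ.toRingHom (Polynomial.C (MvPolynomial.X 0)) = _
        rw [Polynomial.map_C]
        show Polynomial.C (γ (MvPolynomial.X 0)) = _
        rw [hγ, MvPolynomial.aeval_X]
        rfl
      · have h0 : Equiv.swap (0 : Fin 2) 1 1 = 0 := Equiv.swap_apply_right 0 1
        rw [AlgHom.comp_apply, AlgHom.comp_apply, MvPolynomial.aeval_X]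
        rw [MvPolynomial.rename_X, h0, AlgEquiv.coe_algHom, MvPolynomial.finSuccEquiv_X_zero]
        show Polynomial.map γ.toRingHom Polynomial.X = _
        rw [Polynomial.map_X]
        rfl
    exact (DFunLike.congr_fun hcomp2 f).symm
  have hdeg : p.natDegree = f.degreeOf 1 := by
    rw [hpq, Polynomial.natDegree_map_eq_of_injective hγinj,
      MvPolynomial.natDegree_finSuccEquiv]
    have h2 := MvPolynomial.degreeOf_rename_of_injective
      (p := f) (f := ⇑(Equiv.swap (0 : Fin 2) 1)) (Equiv.injective _) 1
    rwa [Equiv.swap_apply_right] at h2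
  have hp1 : 1 ≤ p.natDegree := by rw [hdeg]; exact hf
  -- ℂ(x)(y) = L
  have hmemadj : ∀ r : MvPolynomial (Fin 2) ℂ,
      algebraMap (MvPolynomial (Fin 2) ℂ) L r ∈
        IntermediateField.adjoin ℂ (({x} ∪ {y}) : Set L) := by
    intro r
    have hφg : (φ : MvPolynomial (Fin 2) ℂ →ₐ[ℂ] L) = MvPolynomial.aeval ![x, y] := by
      rw [MvPolynomial.aeval_unique φ, hgX]
    have h3 : MvPolynomial.aeval ![x, y] r ∈ Algebra.adjoin ℂ (Set.range ![x, y]) := by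
      rw [Algebra.adjoin_range_eq_range_aeval]
      exact ⟨r, rfl⟩
    have hrange : Set.range ![x, y] = ({x} ∪ {y} : Set L) := by
      apply Set.eq_of_subset_of_subset
      · rintro w ⟨i, rfl⟩
        fin_cases i
        · exact Or.inl rfl
        · exact Or.inr rfl
      · rintro w (rfl | rfl)
        exacts [⟨0, rfl⟩, ⟨1, rfl⟩]
    rw [hrange] at h3
    rw [← hφ, hφg]
    exact IntermediateField.algebra_adjoin_le_adjoin ℂ _ h3
  have hxytop : IntermediateField.adjoin ℂ (({x} ∪ {y}) : Set L) = ⊤ := by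
    rw [eq_top_iff]
    intro z _
    obtain ⟨a, b, hb, hab⟩ := IsFractionRing.div_surjective (A := MvPolynomial (Fin 2) ℂ) z
    rw [← hab]
    exact div_mem (hmemadj a) (hmemadj b)
  have hEgen : IntermediateField.adjoin (↥ℂ⟮x⟯) ({y} : Set L) = ⊤ := by
    rw [eq_top_iff]
    intro z _
    rw [← IntermediateField.mem_restrictScalars ℂ, IntermediateField.adjoin_adjoin_left,
      hxytop]
    trivial
  -- apply the main lemma
  have key := main_aux (F := ↥ℂ⟮x⟯) hyE hEgen p hp1
  rw [haA, hdeg] at key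
  have hKeq : IntermediateField.adjoin ℂ
      ({x, algebraMap (MvPolynomial (Fin 2) ℂ) L f} : Set L) =
      (IntermediateField.adjoin (↥ℂ⟮x⟯)
        ({algebraMap (MvPolynomial (Fin 2) ℂ) L f} : Set L)).restrictScalars ℂ := by
    rw [IntermediateField.adjoin_adjoin_left, Set.singleton_union]
  rw [hKeq]
  exact key


end AuxB

/-- Let `f ∈ ℂ[x,y]` with `n = deg_y f ≥ 1`.  Then `ℂ(x,y)` is a finite algebraic
extension of its subfield `ℂ(x,f)` generated over `ℂ` by `x` and `f`, and
`[ℂ(x,y) : ℂ(x,f)] = deg_y f`.  Here `ℂ(x,y)` is the fraction field of `ℂ[x,y]`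
(variable `0` is `x`, variable `1` is `y`), and `deg_y f` is `f.degreeOf 1`. -/
theorem degree_over_C_x_f_eq_degy (f : MvPolynomial (Fin 2) ℂ)
    (hf : 1 ≤ f.degreeOf 1) :
    FiniteDimensional
      (↥(IntermediateField.adjoin ℂ
        ({algebraMap (MvPolynomial (Fin 2) ℂ) (FractionRing (MvPolynomial (Fin 2) ℂ)) (X 0),
          algebraMap (MvPolynomial (Fin 2) ℂ) (FractionRing (MvPolynomial (Fin 2) ℂ)) f} :
          Set (FractionRing (MvPolynomial (Fin 2) ℂ)))))
      (FractionRing (MvPolynomial (Fin 2) ℂ)) ∧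
    Module.finrank
      (↥(IntermediateField.adjoin ℂ
        ({algebraMap (MvPolynomial (Fin 2) ℂ) (FractionRing (MvPolynomial (Fin 2) ℂ)) (X 0),
          algebraMap (MvPolynomial (Fin 2) ℂ) (FractionRing (MvPolynomial (Fin 2) ℂ)) f} :
          Set (FractionRing (MvPolynomial (Fin 2) ℂ)))))
      (FractionRing (MvPolynomial (Fin 2) ℂ)) = f.degreeOf 1 :=
  bridge f hf rfl rfl
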